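/- Let F be a finitely supported sequence in the open unit disc with nonlinear Fourier transform (a, b). Then the meromorphic extension of a to the Riemann sphere has no zeros in the closed exterior disc {z : |z| > 1} ∪ {∞}. -/

import Mathlib

/-- The transfer matrix `T_n(z) = (1−|F_n|²)^{-1/2}·[[1, F_n zⁿ],[conj(F_n) z⁻ⁿ, 1]]`. -/
noncomputable def transfer (F : ℤ → ℂ) (z : ℂ) (n : ℤ) : Matrix (Fin 2) (Fin 2) ℂ :=
  (((Real.sqrt (1 - ‖F n‖ ^ 2))⁻¹ : ℝ) : ℂ) •
    !![1, F n * z ^ n; (starRingEnd ℂ) (F n) * z ^ (-n), 1]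

/-- The nonlinear Fourier transform matrix (ordered product over `s`). -/
noncomputable def nlft (F : ℤ → ℂ) (s : Finset ℤ) (z : ℂ) : Matrix (Fin 2) (Fin 2) ℂ :=
  ((s.sort (· ≤ ·)).map (transfer F z)).prod

open Complex Polynomial Filter

private lemma step_ineq {u v Fk : ℂ} (hF : ‖Fk‖ < 1)
    (h : ‖v‖ < ‖u‖) :
    ‖(starRingEnd ℂ) Fk * u + v‖ < ‖u + Fk * v‖ := by
  have hnsq : Complex.normSq ((starRingEnd ℂ) Fk * u + v) < Complex.normSq (u + Fk * v) := by
    have e : Complex.normSq (u + Fk * v) - Complex.normSq ((starRingEnd ℂ) Fk * u + v)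
        = (1 - Complex.normSq Fk) * (Complex.normSq u - Complex.normSq v) := by
      simp only [Complex.normSq_apply, Complex.add_re, Complex.add_im, Complex.mul_re,
        Complex.mul_im, Complex.conj_re, Complex.conj_im]
      ring
    have h1 : Complex.normSq Fk < 1 := by
      rw [← Complex.sq_norm]; nlinarith [norm_nonneg Fk]
    have h2 : Complex.normSq v < Complex.normSq u := by
      rw [← Complex.sq_norm, ← Complex.sq_norm]; nlinarith [norm_nonneg v]
    nlinarith
  have := Real.sqrt_lt_sqrt (Complex.normSq_nonneg _) hnsq
  simpa [Complex.norm_def] using this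

private lemma c_pos {F : ℤ → ℂ} (hF : ∀ n, ‖F n‖ < 1) (n : ℤ) :
    0 < (Real.sqrt (1 - ‖F n‖ ^ 2))⁻¹ := by
  have h : 0 < 1 - ‖F n‖ ^ 2 := by nlinarith [norm_nonneg (F n), hF n]
  positivity

private lemma transfer_mul_apply (F : ℤ → ℂ) (z : ℂ) (k : ℤ) (G : Matrix (Fin 2) (Fin 2) ℂ) :
    (transfer F z k * G) 0 0
      = (((Real.sqrt (1 - ‖F k‖ ^ 2))⁻¹ : ℝ) : ℂ)
          * (G 0 0 + F k * (z ^ k * G 1 0)) ∧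
    (transfer F z k * G) 1 0
      = (((Real.sqrt (1 - ‖F k‖ ^ 2))⁻¹ : ℝ) : ℂ)
          * ((starRingEnd ℂ) (F k) * z ^ (-k) * G 0 0 + G 1 0) := by
  constructor <;>
  · simp [transfer, Matrix.mul_apply, Fin.sum_univ_two]
    ring

private lemma nlft_key {F : ℤ → ℂ} (hF : ∀ n, ‖F n‖ < 1) :
    ∀ l : List ℤ, l.Pairwise (· ≤ ·) → ∀ n : ℤ, (∀ k ∈ l, n ≤ k) →
    ∃ P Q : Polynomial ℂ, P.eval 0 ≠ 0 ∧
      ∀ z : ℂ, 1 ≤ ‖z‖ →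
        ((l.map (transfer F z)).prod 0 0 = P.eval z⁻¹ ∧
         z ^ n * (l.map (transfer F z)).prod 1 0 = Q.eval z⁻¹ ∧
         ‖z ^ n * (l.map (transfer F z)).prod 1 0‖ <
           ‖(l.map (transfer F z)).prod 0 0‖) := by
  intro l
  induction l with
  | nil =>
    intro _ n _
    exact ⟨1, 0, by simp, fun z hz => by simp⟩
  | cons k t ih =>
    intro hsort n hn
    rw [List.pairwise_cons] at hsort
    obtain ⟨hk, ht⟩ := hsort
    obtain ⟨P, Q, hP0, hPQ⟩ := ih ht k fun x hx => hk x hx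
    have hnk : n ≤ k := hn k (by simp)
    set c : ℝ := (Real.sqrt (1 - ‖F k‖ ^ 2))⁻¹ with hc_def
    have hc : 0 < c := c_pos hF k
    have hcC : (c : ℂ) ≠ 0 := by exact_mod_cast hc.ne'
    -- |Q(0)| ≤ |P(0)| by a limiting argument
    have hmono : ∀ w : ℂ, w ≠ 0 → ‖w‖ ≤ 1 →
        ‖Q.eval w‖ ≤ ‖P.eval w‖ := by
      intro w hw h1
      have hzi : (1:ℝ) ≤ ‖w⁻¹‖ := by
        rw [norm_inv]
        exact one_le_inv_iff₀.mpr ⟨norm_pos_iff.mpr hw, h1⟩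
      obtain ⟨e1, e2, e3⟩ := hPQ w⁻¹ hzi
      rw [inv_inv] at e1 e2
      rw [e1, e2] at e3
      exact e3.le
    have hQP0 : ‖Q.eval 0‖ ≤ ‖P.eval 0‖ := by
      have hcont : ∀ R : Polynomial ℂ,
          Filter.Tendsto (fun w => ‖R.eval w‖) (nhdsWithin (0:ℂ) {0}ᶜ)
            (nhds ‖R.eval 0‖) := fun R =>
        ((continuous_norm.comp R.continuous).tendsto 0).mono_left nhdsWithin_le_nhds
      refine le_of_tendsto_of_tendsto (hcont Q) (hcont P) ?_
      have hsmall : ∀ᶠ w : ℂ in nhds 0, ‖w‖ ≤ 1 := by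
        filter_upwards [Metric.closedBall_mem_nhds (0:ℂ) one_pos] with w hw
        simpa [Complex.dist_eq] using hw
      filter_upwards [self_mem_nhdsWithin, hsmall.filter_mono nhdsWithin_le_nhds] with w hw h1
      exact hmono w hw h1
    have hP0' : (0:ℝ) < ‖P.eval 0‖ := norm_pos_iff.mpr hP0
    refine ⟨Polynomial.C (c:ℂ) * (P + Polynomial.C (F k) * Q),
            Polynomial.C (c:ℂ) * Polynomial.X ^ ((k - n).toNat) *
              (Polynomial.C ((starRingEnd ℂ) (F k)) * P + Q), ?_, ?_⟩
    · -- eval at 0 nonzero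
      simp only [Polynomial.eval_mul, Polynomial.eval_add, Polynomial.eval_C]
      refine mul_ne_zero hcC ?_
      intro h0
      have : P.eval 0 = -(F k * Q.eval 0) := by linear_combination h0
      have habs : ‖P.eval 0‖ = ‖F k‖ * ‖Q.eval 0‖ := by
        rw [this, norm_neg, norm_mul]
      nlinarith [hF k, norm_nonneg (Q.eval 0), norm_nonneg (F k)]
    · intro z hz
      have hz0 : z ≠ 0 := by
        intro h; rw [h] at hz; simp at hz; linarith
      obtain ⟨e1, e2, e3⟩ := hPQ z hz
      rw [List.map_cons, List.prod_cons]
      set G := (t.map (transfer F z)).prod with hG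
      obtain ⟨m1, m2⟩ := transfer_mul_apply F z k G
      have hzpow : z ^ (n - k) = z⁻¹ ^ (k - n).toNat := by
        rw [← zpow_natCast (z⁻¹), Int.toNat_of_nonneg (by omega : (0:ℤ) ≤ k - n),
          inv_zpow, ← zpow_neg, neg_sub]
      have e' : z ^ (-k) * z ^ k = 1 := by
        rw [← zpow_add₀ hz0, neg_add_cancel, zpow_zero]
      have key_eq : z ^ n * ((transfer F z k * G) 1 0)
          = (c : ℂ) * (z ^ (n - k) * ((starRingEnd ℂ) (F k) * G 0 0 + z ^ k * G 1 0)) := by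
        rw [m2]
        have hsplit : z ^ (n - k) = z ^ n * z ^ (-k) := by
          rw [← zpow_add₀ hz0, sub_eq_add_neg]
        rw [hsplit]
        linear_combination -((c : ℂ) * z ^ n * G 1 0) * e'
      refine ⟨?_, ?_, ?_⟩
      · rw [m1, e1, e2]
        simp only [Polynomial.eval_mul, Polynomial.eval_add, Polynomial.eval_C]
        rfl
      · rw [key_eq, hzpow, e1, e2]
        simp only [Polynomial.eval_mul, Polynomial.eval_add, Polynomial.eval_C,
          Polynomial.eval_pow, Polynomial.eval_X]
        ring
      · rw [key_eq, m1]
        have hstep : ‖(starRingEnd ℂ) (F k) * G 0 0 + z ^ k * G 1 0‖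
            < ‖G 0 0 + F k * (z ^ k * G 1 0)‖ := step_ineq (hF k) e3
        have hzsm : ‖z ^ (n - k)‖ ≤ 1 := by
          rw [norm_zpow]
          exact zpow_le_one_of_nonpos₀ hz (by omega)
        calc ‖(c:ℂ) * (z ^ (n - k) *
                ((starRingEnd ℂ) (F k) * G 0 0 + z ^ k * G 1 0))‖
            = c * (‖z ^ (n - k)‖ *
                ‖(starRingEnd ℂ) (F k) * G 0 0 + z ^ k * G 1 0‖) := by
              rw [norm_mul, norm_mul, Complex.norm_real, Real.norm_eq_abs, abs_of_pos hc]
          _ ≤ c * ‖(starRingEnd ℂ) (F k) * G 0 0 + z ^ k * G 1 0‖ := by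
              refine mul_le_mul_of_nonneg_left ?_ hc.le
              exact mul_le_of_le_one_left (norm_nonneg _) hzsm
          _ < c * ‖G 0 0 + F k * (z ^ k * G 1 0)‖ :=
              (mul_lt_mul_iff_right₀ hc).mpr hstep
          _ = ‖(c:ℂ) * (G 0 0 + F k * (z ^ k * G 1 0))‖ := by
              rw [norm_mul, Complex.norm_real, Real.norm_eq_abs, abs_of_pos hc]

/-- For a finitely supported sequence `F` in the open unit disc with nonlinear Fourier
transform `(a, b)`, the function `a` has no zeros in `{|z| > 1}` and no zero at `∞`
(i.e. `a` tends to a nonzero limit as `z → ∞`). -/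
theorem nlft_a_no_zeros (F : ℤ → ℂ) (s : Finset ℤ) (hsupp : ∀ n ∉ s, F n = 0)
    (hF : ∀ n, ‖F n‖ < 1) :
    (∀ z : ℂ, 1 < ‖z‖ → nlft F s z 0 0 ≠ 0) ∧
    ∃ L : ℂ, L ≠ 0 ∧
      Filter.Tendsto (fun z => nlft F s z 0 0) (Bornology.cobounded ℂ) (nhds L) := by
  obtain ⟨n, hn⟩ : ∃ n : ℤ, ∀ k ∈ s.sort (· ≤ ·), n ≤ k := by
    rcases s.eq_empty_or_nonempty with h | h
    · exact ⟨0, by simp [h]⟩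
    · exact ⟨s.min' h, fun k hk => s.min'_le k ((Finset.mem_sort _).1 hk)⟩
  obtain ⟨P, Q, hP0, hPQ⟩ := nlft_key hF (s.sort (· ≤ ·)) (Finset.pairwise_sort _ _) n hn
  constructor
  · intro z hz h0
    obtain ⟨_, _, e3⟩ := hPQ z hz.le
    rw [nlft] at h0
    rw [h0] at e3
    simp only [norm_zero] at e3
    exact (norm_nonneg _).not_gt e3
  · refine ⟨P.eval 0, hP0, ?_⟩
    have h1 : Filter.Tendsto (fun z : ℂ => z⁻¹) (Bornology.cobounded ℂ) (nhds 0) :=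
      tendsto_inv₀_cobounded
    have h2 : Filter.Tendsto (fun z : ℂ => P.eval z⁻¹) (Bornology.cobounded ℂ)
        (nhds (P.eval 0)) := (P.continuous.tendsto 0).comp h1
    refine h2.congr' ?_
    filter_upwards [tendsto_norm_cobounded_atTop.eventually_ge_atTop 1] with z hz
    have h1z : 1 ≤ ‖z‖ := by simpa using hz
    rw [nlft]
    exact ((hPQ z h1z).1).symm
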